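/- Sign-coherence together with the recurrence formula implies the basis conjecture: suppose for every seed the g-vectors g^{t_0}_{1;t}, …, g^{t_0}_{n;t} ∈ ℤⁿ form a ℤ-basis when t = t_0 (where they equal the standard basis vectors e_1,…,e_n), and suppose the g-vectors with respect to adjacent base vertices t_1, t_2 (joined by an edge labeled k) are related by the piecewise-linear map T with (Tg)_k = -g_k, (Tg)_i = g_i + [b_{ik}]_+ g_k - b_{ik} min(g_k,0), and suppose at each vertex t the family {g^{t_1}_{a;t}}_a is sign-coherent in coordinate k. Then for every vertex t of the exchange tree, the g-vectors g^{t_0}_{1;t},…,g^{t_0}_{n;t} form a ℤ-basis of ℤⁿ. -/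

import Mathlib

private def Mmat {n : ℕ} (k : Fin n) (c : Fin n → ℤ) : Matrix (Fin n) (Fin n) ℤ :=
  fun i j => if i = k then (if j = k then -1 else 0)
    else (if j = i then 1 else if j = k then c i else 0)

private lemma Mmat_mul_apply {n : ℕ} (k : Fin n) (c : Fin n → ℤ)
    (A : Matrix (Fin n) (Fin n) ℤ) (i a : Fin n) :
    (Mmat k c * A) i a = if i = k then -A k a else A i a + c i * A k a := by
  rw [Matrix.mul_apply]
  rcases eq_or_ne i k with h | h
  · subst h
    rw [Finset.sum_eq_single i (fun l _ hl => by simp [Mmat, hl.symm ∘ Eq.symm, hl]) (by simp)]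
    simp [Mmat]
  · rw [if_neg h]
    have hsub : ({i, k} : Finset (Fin n)) ⊆ Finset.univ := Finset.subset_univ _
    rw [← Finset.sum_subset hsub (fun l _ hl => by
      have h1 : l ≠ i := fun e => hl (by simp [e])
      have h2 : l ≠ k := fun e => hl (by simp [e])
      simp [Mmat, h, h1.symm, h2.symm, h1, h2])]
    rw [Finset.sum_pair h]
    simp [Mmat, h, Ne.symm h]

private lemma Mmat_involutive {n : ℕ} (k : Fin n) (c : Fin n → ℤ) :
    Mmat k c * Mmat k c = 1 := by
  ext i j
  rw [Mmat_mul_apply]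
  rcases eq_or_ne i k with h | h
  · subst h
    rcases eq_or_ne j i with hj | hj
    · subst hj; simp [Mmat]
    · simp [Mmat, hj, Ne.symm hj, Matrix.one_apply]
  · simp only [Mmat, if_neg h, Matrix.one_apply]
    rcases eq_or_ne j i with h1 | h1
    · subst h1; simp [h, Ne.symm h]
    · rcases eq_or_ne j k with h2 | h2
      · subst h2
        simp [h1, Ne.symm h1, h]
      · simp [Ne.symm h1, h2, h1]

private lemma isUnit_det_Mmat {n : ℕ} (k : Fin n) (c : Fin n → ℤ) :
    IsUnit (Mmat k c).det :=
  IsUnit.of_mul_eq_one _ (by rw [← Matrix.det_mul, Mmat_involutive, Matrix.det_one])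


/-- Sign-coherence together with the g-vector recurrence formula implies the basis
conjecture.  The exchange tree is modelled by a type `V` of vertices with edges
labelled by `Fin n` (relation `E`), every vertex being reachable from the base
vertex `t₀`.  To each vertex `t` is attached a matrix `G t` whose columns are the
g-vectors `g_{1;t}, …, g_{n;t}` (with respect to the base vertex `t₀`); at the base
vertex they are the standard basis vectors, and across an edge labelled `k` the
two families are related by the piecewise-linear recurrence
`g'_k = -g_k`, `g'_i = g_i + [b_{ik}]₊ g_k - b_{ik} min(g_k, 0)` (for some exchange
data `b` with `b k = 0`), the family at the source being sign-coherent in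
coordinate `k`.  Then at every vertex the g-vectors form a ℤ-basis of ℤⁿ, i.e. the
matrix `G t` is invertible over ℤ. -/
theorem gVectors_form_basis_of_sign_coherence_and_recurrence
    {n : ℕ} {V : Type*} (E : V → V → Fin n → Prop) (t₀ : V)
    (G : V → Matrix (Fin n) (Fin n) ℤ)
    (hreach : ∀ t : V, Relation.ReflTransGen (fun t₁ t₂ => ∃ k, E t₁ t₂ k) t₀ t)
    (hbase : G t₀ = 1)
    (hedge : ∀ t₁ t₂ : V, ∀ k : Fin n, E t₁ t₂ k →
      ∃ b : Fin n → ℤ, b k = 0 ∧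
        ((∀ a, 0 ≤ G t₁ k a) ∨ (∀ a, G t₁ k a ≤ 0)) ∧
        (∀ a i, G t₂ i a =
          if i = k then -G t₁ k a
          else G t₁ i a + max (b i) 0 * G t₁ k a - b i * min (G t₁ k a) 0)) :
    ∀ t : V, IsUnit (G t).det := by
  intro t
  induction hreach t with
  | refl => simp [hbase]
  | tail _ e ih =>
    obtain ⟨k, he⟩ := e
    rename_i t₁ t₂ _
    obtain ⟨b, hbk, hsc, hrec⟩ := hedge t₁ t₂ k he
    rcases hsc with hpos | hneg
    · have hG : G t₂ = Mmat k (fun i => max (b i) 0) * G t₁ := by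
        ext i a
        rw [Mmat_mul_apply, hrec a i]
        rcases eq_or_ne i k with h | h
        · simp [h]
        · have : min (G t₁ k a) 0 = 0 := min_eq_right (hpos a)
          rw [if_neg h, if_neg h, this]; ring
      rw [hG, Matrix.det_mul]
      exact (isUnit_det_Mmat k _).mul ih
    · have hG : G t₂ = Mmat k (fun i => max (b i) 0 - b i) * G t₁ := by
        ext i a
        rw [Mmat_mul_apply, hrec a i]
        rcases eq_or_ne i k with h | h
        · simp [h]
        · have : min (G t₁ k a) 0 = G t₁ k a := min_eq_left (hneg a)
          rw [if_neg h, if_neg h, this]; ring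
      rw [hG, Matrix.det_mul]
      exact (isUnit_det_Mmat k _).mul ih
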